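/- Let P = x_1 x_2 … x_k (k ≥ 2) be a non-Hamiltonian directed path in a digraph D, and let Q = y_1 y_2 … y_r (r ≥ 1) be a directed path in the subdigraph of D induced by V(D) ∖ V(P). If d^-(y_1, V(P)) + d^+(y_r, V(P)) ≥ k + d^-(y_1, {x_k}) + d^+(y_r, {x_1}), then there exists i ∈ [1, k−1] such that x_i y_1 and y_r x_{i+1} are arcs of D; consequently D contains a directed path from x_1 to x_k with vertex set V(P) ∪ V(Q). -/

import Mathlib

/-!
Basic definitions for finite digraphs (no loops, no multiple arcs), where the arc
relation is `A : V → V → Prop`.  Paths and cycles are given as lists of (distinct)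
vertices.
-/

variable {V : Type*}

/-- A (directed) path, given by the list of its vertices. -/
def IsPathOn (A : V → V → Prop) (l : List V) : Prop :=
  l ≠ [] ∧ l.Nodup ∧ l.Chain' A

/-- A (directed) cycle, given by the list of its vertices; its length (number of
arcs) equals the length of the list. -/
def IsCycleOn (A : V → V → Prop) (l : List V) : Prop :=
  2 ≤ l.length ∧ l.Nodup ∧ l.Chain' A ∧
    ∀ a ∈ l.getLast?, ∀ b ∈ l.head?, A a b

/-- A directed path from `a` to `b`. -/
def IsPathFromTo (A : V → V → Prop) (l : List V) (a b : V) : Prop :=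
  IsPathOn A l ∧ l.head? = some a ∧ l.getLast? = some b

/-- Out-degree `d⁺(x)`. -/
noncomputable def outDeg (A : V → V → Prop) (x : V) : ℕ := {y | A x y}.ncard

/-- In-degree `d⁻(x)`. -/
noncomputable def inDeg (A : V → V → Prop) (x : V) : ℕ := {y | A y x}.ncard

/-- Degree `d(x) = d⁺(x) + d⁻(x)`. -/
noncomputable def deg (A : V → V → Prop) (x : V) : ℕ := outDeg A x + inDeg A x

/-- Out-degree into a set, `d⁺(x, S)`. -/
noncomputable def outDegOn (A : V → V → Prop) (x : V) (S : Set V) : ℕ :=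
  {y ∈ S | A x y}.ncard

/-- In-degree from a set, `d⁻(x, S)`. -/
noncomputable def inDegOn (A : V → V → Prop) (x : V) (S : Set V) : ℕ :=
  {y ∈ S | A y x}.ncard

/-- Degree with respect to a set, `d(x, S) = d⁺(x, S) + d⁻(x, S)`. -/
noncomputable def degOn (A : V → V → Prop) (x : V) (S : Set V) : ℕ :=
  outDegOn A x S + inDegOn A x S

/-- Two distinct vertices are adjacent if there is an arc between them in some
direction. -/
def DAdj (A : V → V → Prop) (x y : V) : Prop := A x y ∨ A y x

/-- `D` is `S`-strongly connected: between any two distinct vertices of `S` there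
are directed paths in both directions. -/
def SetStronglyConnected (A : V → V → Prop) (S : Set V) : Prop :=
  ∀ x ∈ S, ∀ y ∈ S, x ≠ y → ∃ l, IsPathFromTo A l x y

/-- Strong connectivity. -/
def StronglyConnected (A : V → V → Prop) : Prop :=
  ∀ x y : V, x ≠ y → ∃ l, IsPathFromTo A l x y

/-- 2-strong connectivity: at least 3 vertices, and deleting any vertex leaves a
strongly connected digraph. -/
def TwoStronglyConnected [Fintype V] (A : V → V → Prop) : Prop :=
  3 ≤ Fintype.card V ∧
    ∀ w x y : V, x ≠ w → y ≠ w → x ≠ y → ∃ l, IsPathFromTo A l x y ∧ w ∉ l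

/-- Condition `A₀` for a set `Y` of vertices. -/
def CondA0 [Fintype V] (A : V → V → Prop) (Y : Set V) : Prop :=
  ∀ x ∈ Y, ∀ y ∈ Y, ∀ z ∈ Y,
    x ≠ y → x ≠ z → y ≠ z → ¬ DAdj A x y →
      (¬ A x z →
        deg A x + deg A y + outDeg A x + inDeg A z ≥ 3 * Fintype.card V - 2) ∧
      (¬ A z x →
        deg A x + deg A y + inDeg A x + outDeg A z ≥ 3 * Fintype.card V - 2)

/-- A `C`-bypass: a path of length at least two whose end-vertices lie on the
cycle `c` and whose internal vertices avoid `c`. -/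
def IsBypass (A : V → V → Prop) (c p : List V) : Prop :=
  IsPathOn A p ∧ 3 ≤ p.length ∧
    (∀ a ∈ p.head?, a ∈ c) ∧ (∀ b ∈ p.getLast?, b ∈ c) ∧
    ∀ v ∈ p.tail.dropLast, v ∉ c

/-- The vertex `y` can be inserted into the path `p`. -/
def CanInsert (A : V → V → Prop) (p : List V) (y : V) : Prop :=
  ∃ i, ∃ h : i + 1 < p.length, A (p[i]'(Nat.lt_of_succ_lt h)) y ∧ A y (p[i+1]'h)

/-- A `(C, x)`-path: a path from a vertex `u` of the cycle `c` to `x`, meeting `c`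
only in `u`. -/
def IsCtoXPath (A : V → V → Prop) (c l : List V) (u x : V) : Prop :=
  IsPathFromTo A l u x ∧ u ∈ c ∧ ∀ v ∈ l, v ∈ c → v = u

/-- An `(x, C)`-path: a path from `x` to a vertex `v` of the cycle `c`, meeting `c`
only in `v`. -/
def IsXtoCPath (A : V → V → Prop) (c l : List V) (x v : V) : Prop :=
  IsPathFromTo A l x v ∧ v ∈ c ∧ ∀ w ∈ l, w ∈ c → w = v

lemma ncard_sep_singleton' (x : V) (Q : V → Prop) [Decidable (Q x)] :
    {y ∈ ({x} : Set V) | Q y}.ncard = if Q x then 1 else 0 := by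
  split_ifs with h
  · rw [show {y ∈ ({x} : Set V) | Q y} = {x} by
      ext z; simp only [Set.mem_setOf_eq, Set.mem_singleton_iff]
      exact ⟨fun hz => hz.1, fun hz => ⟨hz, hz ▸ h⟩⟩]
    exact Set.ncard_singleton x
  · rw [show {y ∈ ({x} : Set V) | Q y} = ∅ by
      ext z; simp only [Set.mem_setOf_eq, Set.mem_singleton_iff, Set.mem_empty_iff_false,
        iff_false, not_and]
      rintro rfl; exact h]
    exact Set.ncard_empty V

lemma ncard_sep_mem_list (p : List V) (hnd : p.Nodup) (Q : V → Prop) [DecidablePred Q] (d : V) :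
    {y ∈ {v | v ∈ p} | Q y}.ncard
      = ((Finset.range p.length).filter (fun i => Q (p.getD i d))).card := by
  classical
  set g : ℕ → V := fun i => p.getD i d with hg
  have hgel : ∀ i (h : i < p.length), g i = p[i] := fun i h => List.getD_eq_getElem p d h
  have hs : {y ∈ {v | v ∈ p} | Q y}
      = g '' ↑((Finset.range p.length).filter (fun i => Q (g i))) := by
    ext y
    simp only [Set.mem_setOf_eq, Set.mem_image, Finset.coe_filter, Finset.mem_range]
    constructor
    · rintro ⟨hy, hQ⟩
      obtain ⟨i, hi, he⟩ := List.mem_iff_getElem.mp hy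
      have hgi : g i = y := by rw [hgel i hi]; exact he
      exact ⟨i, ⟨hi, hgi ▸ hQ⟩, hgi⟩
    · rintro ⟨i, ⟨hi, hQ⟩, rfl⟩
      refine ⟨?_, hQ⟩
      rw [hgel i hi]
      exact List.getElem_mem hi
  rw [hs, Set.ncard_image_of_injOn, Set.ncard_coe_finset]
  intro i hi j hj he
  simp only [Finset.coe_filter, Set.mem_setOf_eq, Finset.mem_range] at hi hj
  have : p[i]'hi.1 = p[j]'hj.1 := by rw [← hgel i hi.1, ← hgel j hj.1]; exact he
  exact (List.Nodup.getElem_inj_iff hnd).mp this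


/-- Lemma 3.2. -/
theorem path_insertion_lemma (A : V → V → Prop) (hloops : ∀ v, ¬ A v v)
    (p : List V) (hp : IsPathOn A p) (hk : 2 ≤ p.length)
    (hnonham : ∃ v : V, v ∉ p)
    (q : List V) (hq : IsPathOn A q) (hdisj : ∀ v ∈ q, v ∉ p)
    (x₁ xₖ y₁ yᵣ : V)
    (hx₁ : p.head? = some x₁) (hxₖ : p.getLast? = some xₖ)
    (hy₁ : q.head? = some y₁) (hyᵣ : q.getLast? = some yᵣ)
    (hdeg : inDegOn A y₁ {v | v ∈ p} + outDegOn A yᵣ {v | v ∈ p} ≥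
      p.length + inDegOn A y₁ {xₖ} + outDegOn A yᵣ {x₁}) :
    (∃ i, ∃ h : i + 1 < p.length,
      A (p[i]'(Nat.lt_of_succ_lt h)) y₁ ∧ A yᵣ (p[i+1]'h)) ∧
    ∃ l : List V, IsPathFromTo A l x₁ xₖ ∧ ∀ v, v ∈ l ↔ (v ∈ p ∨ v ∈ q) := by
  classical
  obtain ⟨hpne, hpnd, hpch⟩ := hp
  obtain ⟨hqne, hqnd, hqch⟩ := hq
  set k := p.length with hkdef
  have hgel : ∀ i (h : i < k), p.getD i x₁ = p[i] := fun i h => List.getD_eq_getElem p x₁ h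
  have h0k : 0 < k := by omega
  have hk1 : k - 1 < k := by omega
  -- endpoints as getElem
  have hx0 : p[0]'h0k = x₁ := by
    have := List.head?_eq_getElem? (l := p)
    rw [hx₁, List.getElem?_eq_getElem h0k] at this
    exact (Option.some.injEq _ _ ▸ this.symm :)
  have hxlast : p[k-1]'hk1 = xₖ := by
    have := List.getLast?_eq_getElem? (l := p)
    rw [hxₖ, List.getElem?_eq_getElem hk1] at this
    exact (Option.some.injEq _ _ ▸ this.symm :)
  have hg0 : p.getD 0 x₁ = x₁ := by rw [hgel 0 h0k]; exact hx0
  have hgk : p.getD (k-1) x₁ = xₖ := by rw [hgel (k-1) hk1]; exact hxlast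
  -- rewrite degrees as cardinalities of index sets
  have hin : inDegOn A y₁ {v | v ∈ p}
      = ((Finset.range k).filter (fun i => A (p.getD i x₁) y₁)).card :=
    ncard_sep_mem_list p hpnd (fun v => A v y₁) x₁
  have hout : outDegOn A yᵣ {v | v ∈ p}
      = ((Finset.range k).filter (fun i => A yᵣ (p.getD i x₁))).card :=
    ncard_sep_mem_list p hpnd (fun v => A yᵣ v) x₁
  have hink : inDegOn A y₁ {xₖ} = if A xₖ y₁ then 1 else 0 :=
    ncard_sep_singleton' xₖ (fun v => A v y₁)
  have houtk : outDegOn A yᵣ {x₁} = if A yᵣ x₁ then 1 else 0 :=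
    ncard_sep_singleton' x₁ (fun v => A yᵣ v)
  set I : Finset ℕ := (Finset.range (k-1)).filter (fun i => A (p.getD i x₁) y₁) with hI
  set J : Finset ℕ := (Finset.range (k-1)).filter (fun i => A yᵣ (p.getD (i+1) x₁)) with hJ
  have hsplit1 : ((Finset.range k).filter (fun i => A (p.getD i x₁) y₁)).card
      = I.card + (if A xₖ y₁ then 1 else 0) := by
    rw [show Finset.range k = insert (k-1) (Finset.range (k-1)) by
      rw [← Finset.range_add_one]; congr 1; omega]
    rw [Finset.filter_insert]
    by_cases h : A (p.getD (k-1) x₁) y₁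
    · rw [if_pos h, if_pos (hgk ▸ h), Finset.card_insert_of_notMem (fun hm => by
        have := Finset.mem_of_mem_filter _ hm
        simp only [Finset.mem_range] at this; omega)]
    · rw [if_neg h, if_neg (fun hc => h (hgk ▸ hc)), add_zero]
  have hsplit2 : ((Finset.range k).filter (fun i => A yᵣ (p.getD i x₁))).card
      = J.card + (if A yᵣ x₁ then 1 else 0) := by
    have h01 : Finset.range k = (Finset.Ico 1 k) ∪ {0} := by
      ext i
      simp only [Finset.mem_range, Finset.mem_union, Finset.mem_Ico, Finset.mem_singleton]
      omega
    rw [h01, Finset.filter_union, Finset.card_union_of_disjoint (by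
      apply Finset.disjoint_filter_filter
      rw [Finset.disjoint_left]
      intro a ha hb
      simp only [Finset.mem_Ico] at ha
      simp only [Finset.mem_singleton] at hb
      omega)]
    congr 1
    · have himg : (Finset.Ico 1 k).filter (fun i => A yᵣ (p.getD i x₁))
          = J.image (· + 1) := by
        ext j
        simp only [hJ, Finset.mem_filter, Finset.mem_Ico, Finset.mem_image, Finset.mem_range]
        constructor
        · rintro ⟨⟨h1, h2⟩, hQ⟩
          exact ⟨j - 1, ⟨by omega, by rw [show j - 1 + 1 = j from by omega]; exact hQ⟩, by omega⟩
        · rintro ⟨m, ⟨hm, hQ⟩, rfl⟩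
          exact ⟨⟨by omega, by omega⟩, hQ⟩
      rw [himg, Finset.card_image_of_injective _ (add_left_injective 1)]
    · rw [Finset.filter_singleton]
      by_cases h : A yᵣ (p.getD 0 x₁)
      · rw [if_pos h, if_pos (by rwa [hg0] at h), Finset.card_singleton]
      · rw [if_neg h, if_neg (fun hc => h (by rwa [hg0])), Finset.card_empty]
  rw [hin, hout, hink, houtk, hsplit1, hsplit2] at hdeg
  have hIsub : I ⊆ Finset.range (k-1) := Finset.filter_subset _ _
  have hJsub : J ⊆ Finset.range (k-1) := Finset.filter_subset _ _
  have hUcard : (I ∪ J).card ≤ k - 1 := by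
    calc (I ∪ J).card ≤ (Finset.range (k-1)).card :=
          Finset.card_le_card (Finset.union_subset hIsub hJsub)
      _ = k - 1 := Finset.card_range _
  have hinter : (I ∩ J).Nonempty := by
    rw [← Finset.card_pos]
    have := Finset.card_union_add_card_inter I J
    omega
  obtain ⟨i, hiIJ⟩ := hinter
  rw [Finset.mem_inter] at hiIJ
  obtain ⟨hiI, hiJ⟩ := hiIJ
  rw [hI, Finset.mem_filter, Finset.mem_range] at hiI
  rw [hJ, Finset.mem_filter, Finset.mem_range] at hiJ
  have hi1 : i + 1 < k := by omega
  have hAi : A (p[i]'(Nat.lt_of_succ_lt hi1)) y₁ := by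
    rw [← hgel i (Nat.lt_of_succ_lt hi1)]; exact hiI.2
  have hAi1 : A yᵣ (p[i+1]'hi1) := by rw [← hgel (i+1) hi1]; exact hiJ.2
  refine ⟨⟨i, hi1, hAi, hAi1⟩, ?_⟩
  -- construct the path
  have htl : (p.take (i+1)).length = i + 1 := by
    rw [List.length_take]; omega
  have hdl : (p.drop (i+1)).length = k - (i+1) := List.length_drop
  have htne : p.take (i+1) ≠ [] := by
    apply List.ne_nil_of_length_pos; omega
  have hdne : p.drop (i+1) ≠ [] := by
    apply List.ne_nil_of_length_pos; omega
  have hqdne : q ++ p.drop (i+1) ≠ [] := fun h => hqne (List.append_eq_nil_iff.mp h).1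
  refine ⟨p.take (i+1) ++ (q ++ p.drop (i+1)), ⟨⟨?_, ?_, ?_⟩, ?_, ?_⟩, ?_⟩
  · exact fun h => htne (List.append_eq_nil_iff.mp h).1
  · -- Nodup
    have hptd : (p.take (i+1) ++ p.drop (i+1)).Nodup := by
      rw [List.take_append_drop]; exact hpnd
    obtain ⟨hnt, hnd', hdistd⟩ := List.nodup_append'.mp hptd
    refine List.nodup_append'.mpr ⟨hnt, List.nodup_append'.mpr
      ⟨hqnd, hnd', fun a haq had => hdisj a haq (List.drop_subset _ p had)⟩, ?_⟩
    intro a hat haqd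
    rcases List.mem_append.mp haqd with h | h
    · exact hdisj a h (List.take_subset _ p hat)
    · exact hdistd hat h
  · -- Chain'
    change List.IsChain A _; rw [List.isChain_append]
    refine ⟨List.IsChain.take hpch _, List.isChain_append.mpr ⟨hqch, List.IsChain.drop hpch _, ?_⟩, ?_⟩
    · intro a ha b hb
      rw [hyᵣ, Option.mem_some_iff] at ha
      rw [List.head?_drop, List.getElem?_eq_getElem hi1, Option.mem_some_iff] at hb
      rw [← ha, ← hb]
      exact hAi1
    · intro a ha b hb
      have htlast : (p.take (i+1)).getLast? = some (p[i]'(Nat.lt_of_succ_lt hi1)) := by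
        rw [List.getLast?_eq_getElem?, htl]
        simp only [Nat.add_sub_cancel]
        rw [show ((p.take (i+1))[i]? = p[i]?) by simp [List.getElem?_take],
          List.getElem?_eq_getElem (Nat.lt_of_succ_lt hi1)]
      rw [htlast, Option.mem_some_iff] at ha
      rw [List.head?_append_of_ne_nil _ hqne, hy₁, Option.mem_some_iff] at hb
      rw [← ha, ← hb]
      exact hAi
  · -- head?
    rw [List.head?_append_of_ne_nil _ htne]
    rw [List.head?_eq_getElem?, show ((p.take (i+1))[0]? = p[0]?) by simp [List.getElem?_take],
      ← List.head?_eq_getElem?]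
    exact hx₁
  · -- getLast?
    rw [List.getLast?_append_of_ne_nil _ hqdne, List.getLast?_append_of_ne_nil _ hdne]
    rw [List.getLast?_eq_getElem?, hdl, List.getElem?_drop,
      show (i + 1 + (k - (i+1) - 1)) = k - 1 from by omega, ← List.getLast?_eq_getElem?]
    exact hxₖ
  · -- membership
    intro v
    have hv : v ∈ p ↔ v ∈ p.take (i+1) ∨ v ∈ p.drop (i+1) := by
      rw [← List.mem_append, List.take_append_drop]
    simp only [List.mem_append]
    rw [hv]
    tauto
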